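/- Fix N ∈ ℕ and ω ∈ ℝᴺ, with κ-Minkowski structure constants f^{aj}_k = 2(ω^a·δ^j_k − ω^j·δ^a_k). On the open set U = {A ∈ ℝᴺ : ω·A ≠ 0} define γ^i_j(A) = (ω·A)·(1 + coth(ω·A))·δ^i_j + ((1 − (ω·A) − (ω·A)·coth(ω·A))/(ω·A))·ω^i·A_j and ρ^i_j(A) = ((exp(2(ω·A)) − 1)/(2(ω·A)))·δ^i_j + ((1 + 2(ω·A) − exp(2(ω·A)))/(2(ω·A)²))·ω^i·A_j. Then ρ is differentiable on U and satisfies the second master equation of the linear Poisson gauge theory at every point of U: Σ_l (γ^j_l(A)·∂^l_A ρ^i_a(A) + ρ^l_a(A)·∂^i_A γ^j_l(A)) = 0 for all i,j,a. -/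

import Mathlib

/-- Partial derivative with respect to the `i`-th coordinate of a real-valued function
of `A ∈ ℝᴺ`. -/
noncomputable def pd {N : ℕ} (i : Fin N) (g : (Fin N → ℝ) → ℝ) (A : Fin N → ℝ) : ℝ :=
  fderiv ℝ g A (Pi.single i 1)

section Aux

lemma kmr_hasDerivAt_coth (x : ℝ) (hs : Real.sinh x ≠ 0) :
    HasDerivAt (fun t => Real.cosh t / Real.sinh t) (-(1/(Real.sinh x)^2)) x := by
  have h := (Real.hasDerivAt_cosh x).div (Real.hasDerivAt_sinh x) hs
  refine h.congr_deriv (Eq.symm ?_)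
  have hcs := Real.cosh_sq_sub_sinh_sq x
  field_simp
  linear_combination hcs

lemma kmr_hasDerivAt_F (x : ℝ) (hx : x ≠ 0) :
    HasDerivAt (fun t => (Real.exp (2*t) - 1)/(2*t))
      (Real.exp (2*x)/x - (Real.exp (2*x) - 1)/(2*x^2)) x := by
  have h1 : HasDerivAt (fun t : ℝ => 2*t) 2 x := by
    simpa using (hasDerivAt_id x).const_mul 2
  have hnum : HasDerivAt (fun t : ℝ => Real.exp (2*t) - 1) (Real.exp (2*x) * 2) x :=
    h1.exp.sub_const 1
  have h := hnum.div h1 (by simpa using hx)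
  refine h.congr_deriv (Eq.symm ?_)
  field_simp

lemma kmr_hasDerivAt_G (x : ℝ) (hx : x ≠ 0) :
    HasDerivAt (fun t => (1 + 2*t - Real.exp (2*t))/(2*t^2))
      ((Real.exp (2*x) - 1 - x - Real.exp (2*x)*x)/x^3) x := by
  have h1 : HasDerivAt (fun t : ℝ => 2*t) 2 x := by
    simpa using (hasDerivAt_id x).const_mul 2
  have hnum : HasDerivAt (fun t : ℝ => 1 + 2*t - Real.exp (2*t)) (2 - Real.exp (2*x) * 2) x := by
    exact ((h1.const_add 1).sub h1.exp)
  have hden : HasDerivAt (fun t : ℝ => 2*t^2) (2*(2*x^1)) x := by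
    simpa using (hasDerivAt_pow 2 x).const_mul 2
  have h := hnum.div hden (by simp [pow_eq_zero_iff, hx])
  refine h.congr_deriv (Eq.symm ?_)
  field_simp
  ring

lemma kmr_hasDerivAt_P (x : ℝ) (hs : Real.sinh x ≠ 0) :
    HasDerivAt (fun t => t * (1 + Real.cosh t / Real.sinh t))
      (1 + Real.cosh x / Real.sinh x - x/(Real.sinh x)^2) x := by
  have h := (hasDerivAt_id x).mul ((kmr_hasDerivAt_coth x hs).const_add 1)
  refine h.congr_deriv (Eq.symm ?_)
  simp only [id_eq]; field_simp
  ring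

lemma kmr_hasDerivAt_Q (x : ℝ) (hx : x ≠ 0) (hs : Real.sinh x ≠ 0) :
    HasDerivAt (fun t => (1 - t - t * (Real.cosh t / Real.sinh t))/t)
      (1/(Real.sinh x)^2 - 1/x^2) x := by
  have hnum : HasDerivAt (fun t : ℝ => 1 - t - t * (Real.cosh t / Real.sinh t))
      (0 - 1 - (1 * (Real.cosh x / Real.sinh x) + x * (-(1/(Real.sinh x)^2)))) x :=
    ((hasDerivAt_const x (1:ℝ)).sub (hasDerivAt_id x)).sub
      ((hasDerivAt_id x).mul (kmr_hasDerivAt_coth x hs))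
  have h := hnum.div (hasDerivAt_id x) hx
  refine h.congr_deriv (Eq.symm ?_)
  simp only [id_eq]; field_simp
  ring

lemma kmr_key_ids (x : ℝ) (hx : x ≠ 0) :
    (x*(1 + Real.cosh x / Real.sinh x)) * (Real.exp (2*x)/x - (Real.exp (2*x)-1)/(2*x^2))
      + ((1 - x - x*(Real.cosh x / Real.sinh x))/x) * x
          * (Real.exp (2*x)/x - (Real.exp (2*x)-1)/(2*x^2))
      + ((Real.exp (2*x)-1)/(2*x)) * ((1 - x - x*(Real.cosh x / Real.sinh x))/x) = 0
    ∧ (x*(1 + Real.cosh x / Real.sinh x)) * ((1+2*x-Real.exp (2*x))/(2*x^2))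
      + ((Real.exp (2*x)-1)/(2*x))
          * (1 + Real.cosh x / Real.sinh x - x/(Real.sinh x)^2) = 0
    ∧ (x*(1 + Real.cosh x / Real.sinh x)) * ((Real.exp (2*x)-1-x-Real.exp (2*x)*x)/x^3)
      + ((1 - x - x*(Real.cosh x / Real.sinh x))/x) * x
          * ((Real.exp (2*x)-1-x-Real.exp (2*x)*x)/x^3)
      + ((1 - x - x*(Real.cosh x / Real.sinh x))/x) * ((1+2*x-Real.exp (2*x))/(2*x^2))
      + ((1+2*x-Real.exp (2*x))/(2*x^2))
          * (1 + Real.cosh x / Real.sinh x - x/(Real.sinh x)^2)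
      + ((Real.exp (2*x)-1)/(2*x)) * (1/(Real.sinh x)^2 - 1/x^2)
      + ((1+2*x-Real.exp (2*x))/(2*x^2)) * (1/(Real.sinh x)^2 - 1/x^2) * x
      + ((1+2*x-Real.exp (2*x))/(2*x^2))
          * ((1 - x - x*(Real.cosh x / Real.sinh x))/x) = 0 := by
  have hs : Real.sinh x ≠ 0 := by simpa [Real.sinh_eq_zero] using hx
  have hu : Real.exp x ≠ 0 := Real.exp_ne_zero x
  have hE : Real.exp (2*x) = Real.exp x * Real.exp x := by
    rw [two_mul, Real.exp_add]
  have hcosh : Real.cosh x = (Real.exp x ^ 2 + 1)/(2*Real.exp x) := by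
    rw [Real.cosh_eq, Real.exp_neg]; field_simp
  have hsinh : Real.sinh x = (Real.exp x ^ 2 - 1)/(2*Real.exp x) := by
    rw [Real.sinh_eq, Real.exp_neg]; field_simp
  have h2 : Real.exp x ^ 2 - 1 ≠ 0 := by
    rw [hsinh] at hs
    intro h; apply hs; rw [h]; simp
  refine ⟨?_, ?_, ?_⟩ <;> rw [hE, hcosh, hsinh] <;> field_simp [h2] <;> ring

noncomputable def kmrL {N : ℕ} (ω : Fin N → ℝ) : (Fin N → ℝ) →L[ℝ] ℝ :=
  ∑ s, ω s • ContinuousLinearMap.proj s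

lemma kmr_hasFDerivAt_S {N : ℕ} (ω A : Fin N → ℝ) :
    HasFDerivAt (fun B : Fin N → ℝ => ∑ s, ω s * B s) (kmrL ω) A := by
  refine HasFDerivAt.fun_sum fun s _ => ?_
  have hp : HasFDerivAt (fun B : Fin N → ℝ => B s)
      (ContinuousLinearMap.proj s : (Fin N → ℝ) →L[ℝ] ℝ) A :=
    (ContinuousLinearMap.proj s : (Fin N → ℝ) →L[ℝ] ℝ).hasFDerivAt
  exact hp.const_mul (ω s)

lemma kmrL_single {N : ℕ} (ω : Fin N → ℝ) (l : Fin N) :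
    kmrL ω (Pi.single l (1:ℝ)) = ω l := by
  simp [kmrL, ContinuousLinearMap.proj_apply, Pi.single_apply, Finset.sum_ite_eq']

lemma kmr_hasFDerivAt_mixed {N : ℕ} (ω A : Fin N → ℝ) (F G : ℝ → ℝ) (F' G' : ℝ)
    (hF : HasDerivAt F F' (∑ s, ω s * A s)) (hG : HasDerivAt G G' (∑ s, ω s * A s))
    (d c : ℝ) (a : Fin N) :
    HasFDerivAt (fun B : Fin N → ℝ =>
        F (∑ s, ω s * B s) * d + G (∑ s, ω s * B s) * c * B a)
      (d • (F' • kmrL ω) +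
        ((G (∑ s, ω s * A s) * c) • (ContinuousLinearMap.proj a : (Fin N → ℝ) →L[ℝ] ℝ)
          + A a • (c • (G' • kmrL ω)))) A := by
  have hS := kmr_hasFDerivAt_S ω A
  have h2 := (hF.comp_hasFDerivAt A hS).mul_const d
  have h4 := (hG.comp_hasFDerivAt A hS).mul_const c
  have h5 : HasFDerivAt (fun B : Fin N → ℝ => B a)
      (ContinuousLinearMap.proj a : (Fin N → ℝ) →L[ℝ] ℝ) A :=
    (ContinuousLinearMap.proj a : (Fin N → ℝ) →L[ℝ] ℝ).hasFDerivAt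
  exact h2.add (h4.mul h5)

lemma kmr_pd_mixed {N : ℕ} (ω A : Fin N → ℝ) (F G : ℝ → ℝ) (F' G' : ℝ)
    (hF : HasDerivAt F F' (∑ s, ω s * A s)) (hG : HasDerivAt G G' (∑ s, ω s * A s))
    (d c : ℝ) (a l : Fin N) :
    pd l (fun B : Fin N → ℝ =>
        F (∑ s, ω s * B s) * d + G (∑ s, ω s * B s) * c * B a) A
      = F' * ω l * d + G' * ω l * c * A a
        + G (∑ s, ω s * A s) * c * (if l = a then 1 else 0) := by
  have h := kmr_hasFDerivAt_mixed ω A F G F' G' hF hG d c a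
  rw [pd, h.fderiv]
  simp [kmrL_single, ContinuousLinearMap.proj_apply, Pi.single_apply, eq_comm]
  ring_nf

lemma kmr_assemble {N : ℕ} (ω A : Fin N → ℝ) (i j a : Fin N)
    (P Q F G P' Q' F' G' : ℝ)
    (gv rv pv qv : Fin N → ℝ)
    (i1 : P*F' + Q*(∑ s, ω s * A s)*F' + F*Q = 0)
    (i2 : P*G + F*P' = 0)
    (i3 : P*G' + Q*(∑ s, ω s * A s)*G' + Q*G + G*P' + F*Q' + G*Q'*(∑ s, ω s * A s) + G*Q = 0)
    (hg : ∀ l, gv l = P * (if j = l then 1 else 0) + Q * ω j * A l)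
    (hr : ∀ l, rv l = F * (if l = a then 1 else 0) + G * ω l * A a)
    (hp : ∀ l, pv l = F' * ω l * (if i = a then 1 else 0) + G' * ω l * ω i * A a
        + G * ω i * (if l = a then 1 else 0))
    (hq : ∀ l, qv l = P' * ω i * (if j = l then 1 else 0) + Q' * ω i * ω j * A l
        + Q * ω j * (if i = l then 1 else 0)) :
    ∑ l, (gv l * pv l + rv l * qv l) = 0 := by
  have expand : ∀ l ∈ (Finset.univ : Finset (Fin N)), gv l * pv l + rv l * qv l =
      (P*F'*(if i = a then 1 else 0) + P*G'*(ω i)*(A a) + G*P'*(ω i)*(A a))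
          * ((if j = l then 1 else 0) * ω l)
      + (P*G*(ω i) + F*P'*(ω i))
          * ((if j = l then 1 else 0) * (if l = a then 1 else 0))
      + (Q*F'*(ω j)*(if i = a then 1 else 0) + Q*G'*(ω j)*(ω i)*(A a)
            + G*Q'*(ω i)*(ω j)*(A a)) * (ω l * A l)
      + (Q*G*(ω j)*(ω i) + F*Q'*(ω i)*(ω j)) * ((if l = a then 1 else 0) * A l)
      + (F*Q*(ω j)) * ((if i = l then 1 else 0) * (if l = a then 1 else 0))
      + (G*Q*(ω j)*(A a)) * ((if i = l then 1 else 0) * ω l) := by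
    intro l _
    rw [hg, hr, hp, hq]
    ring
  rw [Finset.sum_congr rfl expand]
  have hE1 : ∑ l, (if j = l then (1:ℝ) else 0) * ω l = ω j := by simp
  have hE2 : ∑ l, (if j = l then (1:ℝ) else 0) * (if l = a then 1 else 0)
      = (if j = a then 1 else 0) := by simp
  have hE4 : ∑ l, (if l = a then (1:ℝ) else 0) * A l = A a := by simp
  have hE5 : ∑ l, (if i = l then (1:ℝ) else 0) * (if l = a then 1 else 0)
      = (if i = a then 1 else 0) := by simp
  have hE6 : ∑ l, (if i = l then (1:ℝ) else 0) * ω l = ω i := by simp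
  simp only [Finset.sum_add_distrib, ← Finset.mul_sum]
  rw [hE1, hE2, hE4, hE5, hE6]
  linear_combination (ω j * (if i = a then (1:ℝ) else 0)) * i1
    + ((if j = a then (1:ℝ) else 0) * ω i) * i2
    + (ω i * ω j * A a) * i3

end Aux

/-- For the κ-Minkowski matrices
`γ^i_j(A) = (ω·A)(1 + coth(ω·A)) δ^i_j + ((1 − (ω·A) − (ω·A)coth(ω·A))/(ω·A)) ω^i A_j` and
`ρ^i_j(A) = ((e^{2(ω·A)} − 1)/(2(ω·A))) δ^i_j + ((1 + 2(ω·A) − e^{2(ω·A)})/(2(ω·A)²)) ω^i A_j`,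
`ρ` is differentiable on `U = {A : ω·A ≠ 0}` and satisfies the second master equation
`Σ_l (γ^j_l ∂^l_A ρ^i_a + ρ^l_a ∂^i_A γ^j_l) = 0` at every point of `U`. -/
theorem kappa_minkowski_rho_second_master (N : ℕ) (ω : Fin N → ℝ)
    (γ : (Fin N → ℝ) → Fin N → Fin N → ℝ)
    (hγ : ∀ A i j, γ A i j =
      (∑ s, ω s * A s) *
          (1 + Real.cosh (∑ s, ω s * A s) / Real.sinh (∑ s, ω s * A s)) *
          (if i = j then 1 else 0)
      + ((1 - (∑ s, ω s * A s)
            - (∑ s, ω s * A s) * (Real.cosh (∑ s, ω s * A s) / Real.sinh (∑ s, ω s * A s)))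
          / (∑ s, ω s * A s)) * ω i * A j)
    (ρ : (Fin N → ℝ) → Fin N → Fin N → ℝ)
    (hρ : ∀ A i j, ρ A i j =
      ((Real.exp (2 * ∑ s, ω s * A s) - 1) / (2 * ∑ s, ω s * A s)) * (if i = j then 1 else 0)
      + ((1 + 2 * (∑ s, ω s * A s) - Real.exp (2 * ∑ s, ω s * A s))
          / (2 * (∑ s, ω s * A s) ^ 2)) * ω i * A j) :
    (∀ A : Fin N → ℝ, (∑ s, ω s * A s) ≠ 0 →
        ∀ i j, DifferentiableAt ℝ (fun B => ρ B i j) A) ∧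
    (∀ A : Fin N → ℝ, (∑ s, ω s * A s) ≠ 0 → ∀ i j a,
        ∑ l, (γ A j l * pd l (fun B => ρ B i a) A + ρ A l a * pd i (fun B => γ B j l) A)
          = 0) := by
  constructor
  · intro A hx i j
    have h2 : (fun B => ρ B i j) = (fun B : Fin N → ℝ =>
        (fun t : ℝ => (Real.exp (2*t) - 1)/(2*t)) (∑ s, ω s * B s) * (if i = j then 1 else 0)
        + (fun t : ℝ => (1 + 2*t - Real.exp (2*t))/(2*t^2)) (∑ s, ω s * B s) * ω i * B j) :=
      funext fun B => hρ B i j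
    rw [h2]
    exact (kmr_hasFDerivAt_mixed ω A _ _ _ _
      (kmr_hasDerivAt_F _ hx) (kmr_hasDerivAt_G _ hx)
      (if i = j then 1 else 0) (ω i) j).differentiableAt
  · intro A hx i j a
    have hs : Real.sinh (∑ s, ω s * A s) ≠ 0 := by
      simpa [Real.sinh_eq_zero] using hx
    have pdρ : ∀ l, pd l (fun B => ρ B i a) A =
        (Real.exp (2*(∑ s, ω s * A s))/(∑ s, ω s * A s)
            - (Real.exp (2*(∑ s, ω s * A s))-1)/(2*(∑ s, ω s * A s)^2)) * ω l
            * (if i = a then 1 else 0)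
        + ((Real.exp (2*(∑ s, ω s * A s))-1-(∑ s, ω s * A s)
              - Real.exp (2*(∑ s, ω s * A s))*(∑ s, ω s * A s))/(∑ s, ω s * A s)^3)
            * ω l * ω i * A a
        + ((1 + 2*(∑ s, ω s * A s) - Real.exp (2*(∑ s, ω s * A s)))/(2*(∑ s, ω s * A s)^2))
            * ω i * (if l = a then 1 else 0) := by
      intro l
      have h2 : (fun B => ρ B i a) = (fun B : Fin N → ℝ =>
          (fun t : ℝ => (Real.exp (2*t) - 1)/(2*t)) (∑ s, ω s * B s) * (if i = a then 1 else 0)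
          + (fun t : ℝ => (1 + 2*t - Real.exp (2*t))/(2*t^2)) (∑ s, ω s * B s) * ω i * B a) :=
        funext fun B => hρ B i a
      rw [h2]
      exact kmr_pd_mixed ω A _ _ _ _
        (kmr_hasDerivAt_F _ hx) (kmr_hasDerivAt_G _ hx) (if i = a then 1 else 0) (ω i) a l
    have pdγ : ∀ l, pd i (fun B => γ B j l) A =
        (1 + Real.cosh (∑ s, ω s * A s) / Real.sinh (∑ s, ω s * A s)
            - (∑ s, ω s * A s)/(Real.sinh (∑ s, ω s * A s))^2) * ω i
            * (if j = l then 1 else 0)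
        + (1/(Real.sinh (∑ s, ω s * A s))^2 - 1/(∑ s, ω s * A s)^2) * ω i * ω j * A l
        + ((1 - (∑ s, ω s * A s)
              - (∑ s, ω s * A s) * (Real.cosh (∑ s, ω s * A s) / Real.sinh (∑ s, ω s * A s)))
            / (∑ s, ω s * A s)) * ω j * (if i = l then 1 else 0) := by
      intro l
      have h2 : (fun B => γ B j l) = (fun B : Fin N → ℝ =>
          (fun t : ℝ => t * (1 + Real.cosh t / Real.sinh t)) (∑ s, ω s * B s)
              * (if j = l then 1 else 0)
          + (fun t : ℝ => (1 - t - t * (Real.cosh t / Real.sinh t))/t) (∑ s, ω s * B s)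
              * ω j * B l) :=
        funext fun B => hγ B j l
      rw [h2]
      exact kmr_pd_mixed ω A _ _ _ _
        (kmr_hasDerivAt_P _ hs) (kmr_hasDerivAt_Q _ hx hs) (if j = l then 1 else 0) (ω j) l i
    obtain ⟨i1, i2, i3⟩ := kmr_key_ids (∑ s, ω s * A s) hx
    exact kmr_assemble ω A i j a _ _ _ _ _ _ _ _ _ _ _ _ i1 i2 i3
      (fun l => hγ A j l) (fun l => hρ A l a) pdρ pdγ
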